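/- For any pair of C² functions u, v on an open set of ℝ², the following pointwise identity holds: Δu·(∇v·x) + Δv·(∇u·x) = div( ∇u·(∇v·x) + ∇v·(∇u·x) − (∇u·∇v)·x ), where x denotes the position vector. -/

import Mathlib

open scoped RealInnerProductSpace

noncomputable section

abbrev E2 : Type := EuclideanSpace ℝ (Fin 2)

/-- The Laplacian on `ℝ²`, computed via second directional derivatives in the
coordinate directions. -/
def lap (u : E2 → ℝ) (x : E2) : ℝ :=
  fderiv ℝ (fun y => fderiv ℝ u y (EuclideanSpace.single 0 1)) x (EuclideanSpace.single 0 1) +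
  fderiv ℝ (fun y => fderiv ℝ u y (EuclideanSpace.single 1 1)) x (EuclideanSpace.single 1 1)

/-- The divergence of a vector field on `ℝ²`. -/
def div2 (W : E2 → E2) (x : E2) : ℝ :=
  ⟪fderiv ℝ W x (EuclideanSpace.single 0 1), EuclideanSpace.single 0 1⟫ +
  ⟪fderiv ℝ W x (EuclideanSpace.single 1 1), EuclideanSpace.single 1 1⟫

set_option maxHeartbeats 2000000 in
/-- for any pair of C² functions `u, v` on an open set of `ℝ²`,
`Δu (∇v·x) + Δv (∇u·x) = div(∇u (∇v·x) + ∇v (∇u·x) − (∇u·∇v) x)`. -/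
theorem divergence_identity (U : Set E2) (hU : IsOpen U) (u v : E2 → ℝ)
    (hu : ContDiffOn ℝ 2 u U) (hv : ContDiffOn ℝ 2 v U) :
    ∀ x ∈ U,
      lap u x * ⟪gradient v x, x⟫ + lap v x * ⟪gradient u x, x⟫ =
        div2 (fun y =>
          ⟪gradient v y, y⟫ • gradient u y + ⟪gradient u y, y⟫ • gradient v y
            - ⟪gradient u y, gradient v y⟫ • y) x := by
  intro x hx
  set e0 : E2 := EuclideanSpace.single 0 1 with he0
  set e1 : E2 := EuclideanSpace.single 1 1 with he1
  have hux : ContDiffAt ℝ 2 u x := (hu x hx).contDiffAt (hU.mem_nhds hx)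
  have hvx : ContDiffAt ℝ 2 v x := (hv x hx).contDiffAt (hU.mem_nhds hx)
  have hdu : DifferentiableAt ℝ (fderiv ℝ u) x :=
    (hux.fderiv_right (m := 1) le_rfl).differentiableAt one_ne_zero
  have hdv : DifferentiableAt ℝ (fderiv ℝ v) x :=
    (hvx.fderiv_right (m := 1) le_rfl).differentiableAt one_ne_zero
  set Fu := fderiv ℝ (fderiv ℝ u) x with hFu
  set Fv := fderiv ℝ (fderiv ℝ v) x with hFv
  -- gradient coordinates
  have hgcoord : ∀ (w : E2 → ℝ) (y : E2) (i : Fin 2),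
      gradient w y i = fderiv ℝ w y (EuclideanSpace.single i 1) := by
    intro w y i
    have h : ⟪gradient w y, EuclideanSpace.single i (1:ℝ)⟫ = fderiv ℝ w y (EuclideanSpace.single i 1) :=
      InnerProductSpace.toDual_symm_apply
    rw [← h]; simp only [EuclideanSpace.inner_single_right]; simp
  -- gradient as explicit sum
  have hgrad : ∀ (w : E2 → ℝ) (y : E2),
      gradient w y = (fderiv ℝ w y e0) • e0 + (fderiv ℝ w y e1) • e1 := by
    intro w y
    ext i
    fin_cases i <;>
      simp [hgcoord, he0, he1, EuclideanSpace.single_apply]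
  -- derivative of directional derivatives
  have hD : ∀ (w : E2 → ℝ), DifferentiableAt ℝ (fderiv ℝ w) x → ∀ z : E2,
      HasFDerivAt (fun y => fderiv ℝ w y z)
        ((ContinuousLinearMap.apply ℝ ℝ z).comp (fderiv ℝ (fderiv ℝ w) x)) x := by
    intro w hw z
    exact (ContinuousLinearMap.apply ℝ ℝ z).hasFDerivAt.comp x hw.hasFDerivAt
  -- derivative of gradient
  have hgu : HasFDerivAt (gradient u)
      (((fderiv ℝ u x e0) • (0 : E2 →L[ℝ] E2) +
         ((ContinuousLinearMap.apply ℝ ℝ e0).comp Fu).smulRight e0) +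
       ((fderiv ℝ u x e1) • (0 : E2 →L[ℝ] E2) +
         ((ContinuousLinearMap.apply ℝ ℝ e1).comp Fu).smulRight e1)) x := by
    have h := ((hD u hdu e0).smul (hasFDerivAt_const e0 x)).add
      ((hD u hdu e1).smul (hasFDerivAt_const e1 x))
    exact h.congr_of_eventuallyEq (Filter.Eventually.of_forall fun y => hgrad u y)
  have hgv : HasFDerivAt (gradient v)
      (((fderiv ℝ v x e0) • (0 : E2 →L[ℝ] E2) +
         ((ContinuousLinearMap.apply ℝ ℝ e0).comp Fv).smulRight e0) +
       ((fderiv ℝ v x e1) • (0 : E2 →L[ℝ] E2) +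
         ((ContinuousLinearMap.apply ℝ ℝ e1).comp Fv).smulRight e1)) x := by
    have h := ((hD v hdv e0).smul (hasFDerivAt_const e0 x)).add
      ((hD v hdv e1).smul (hasFDerivAt_const e1 x))
    exact h.congr_of_eventuallyEq (Filter.Eventually.of_forall fun y => hgrad v y)
  -- symmetry of second derivatives
  have hsu : Fu e0 e1 = Fu e1 e0 := hux.isSymmSndFDerivAt (by simp [minSmoothness_of_isRCLikeNormedField]) e0 e1
  have hsv : Fv e0 e1 = Fv e1 e0 := hvx.isSymmSndFDerivAt (by simp [minSmoothness_of_isRCLikeNormedField]) e0 e1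
  -- Laplacian in terms of Fu
  have hlap : ∀ (w : E2 → ℝ), DifferentiableAt ℝ (fderiv ℝ w) x →
      lap w x = fderiv ℝ (fderiv ℝ w) x e0 e0 + fderiv ℝ (fderiv ℝ w) x e1 e1 := by
    intro w hw
    rw [lap, (hD w hw e0).fderiv, (hD w hw e1).fderiv]
    simp
    rfl
  -- derivative of the vector field
  have hW := (((hgv.inner ℝ (hasFDerivAt_id x)).smul hgu).add
      ((hgu.inner ℝ (hasFDerivAt_id x)).smul hgv)).sub
      ((hgu.inner ℝ hgv).smul (hasFDerivAt_id x))
  simp only [id_eq] at hW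
  rw [div2, (hW.congr_of_eventuallyEq (f₁ := fun y => ⟪gradient v y, y⟫ • gradient u y + ⟪gradient u y, y⟫ • gradient v y - ⟪gradient u y, gradient v y⟫ • y) (Filter.Eventually.of_forall fun y => rfl)).fderiv, hlap u hdu, hlap v hdv, ← hFu, ← hFv]
  simp only [ContinuousLinearMap.add_apply, ContinuousLinearMap.sub_apply,
    ContinuousLinearMap.smul_apply, ContinuousLinearMap.smulRight_apply,
    ContinuousLinearMap.comp_apply, ContinuousLinearMap.prod_apply,
    fderivInnerCLM_apply, ContinuousLinearMap.zero_apply,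
    ContinuousLinearMap.coe_id', id_eq, ContinuousLinearMap.apply_apply,
    smul_zero, zero_add, add_zero]
  have coord : ∀ z w : E2, ⟪z, w⟫ = z 0 * w 0 + z 1 * w 1 := by
    intro z w; simp [PiLp.inner_apply, Fin.sum_univ_two, mul_comm]
  simp only [he0, he1] at *
  simp only [coord, PiLp.add_apply, PiLp.smul_apply, PiLp.sub_apply, smul_eq_mul,
    hgcoord, EuclideanSpace.single_apply]
  norm_num
  linear_combination
    -((fderiv ℝ u x) (EuclideanSpace.single 0 1) * x 1 -
        (fderiv ℝ u x) (EuclideanSpace.single 1 1) * x 0) * hsv -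
    ((fderiv ℝ v x) (EuclideanSpace.single 0 1) * x 1 -
        (fderiv ℝ v x) (EuclideanSpace.single 1 1) * x 0) * hsu
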